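/- Let M = (S, ρ) be a matroid scheme, let x, y ∈ S, and suppose u is a flat of M that is a minimal upper bound of cl(x) and cl(y) within the poset of flats F(M). Then there exists v ∈ x∨y (a minimal upper bound of x and y in S) such that cl(v) = u. -/

import Mathlib

/-- The set of minimal upper bounds of `x` and `y` (denoted `x ∨ y` in the paper). -/
def mub {S : Type*} [PartialOrder S] (x y : S) : Set S :=
  {u | x ≤ u ∧ y ≤ u ∧ ∀ v, x ≤ v → y ≤ v → v ≤ u → v = u}

/-- The set of maximal lower bounds of `x` and `y` (denoted `x ∧ y` in the paper). -/
def mlb {S : Type*} [PartialOrder S] (x y : S) : Set S :=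
  {l | l ≤ x ∧ l ≤ y ∧ ∀ m, m ≤ x → m ≤ y → l ≤ m → m = l}

/-- The set of minimal upper bounds of a subset `T`. -/
def mubSet {S : Type*} [PartialOrder S] (T : Set S) : Set S :=
  {u | (∀ t ∈ T, t ≤ u) ∧ ∀ v, (∀ t ∈ T, t ≤ v) → v ≤ u → v = u}

/-- The number of atoms below `x`, i.e. `|x|`, the rank of `x` in a simplicial poset. -/
noncomputable def natRank {S : Type*} [PartialOrder S] [OrderBot S] (x : S) : ℕ :=
  Nat.card {a : S // IsAtom a ∧ a ≤ x}

/-- A finite bounded-below poset is simplicial if every lower interval is isomorphic to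
the Boolean lattice of subsets of the set of atoms below. -/
def IsSimplicialPoset (S : Type*) [PartialOrder S] [OrderBot S] [Fintype S] : Prop :=
  ∀ x : S, Nonempty (Set.Iic x ≃o Set {a : S // IsAtom a ∧ a ≤ x})

/-- A matroid scheme: a rank function `ρ` on a finite simplicial poset `S`
satisfying (M1)–(M5). -/
structure IsMatroidScheme {S : Type*} [PartialOrder S] [OrderBot S] [Fintype S]
    (ρ : S → ℕ) : Prop where
  simplicial : IsSimplicialPoset S
  M1 : ∀ x : S, ρ x ≤ natRank x
  M2 : ∀ ⦃x y : S⦄, x ≤ y → ρ x ≤ ρ y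
  M3 : ∀ x y u l : S, u ∈ mub x y → l ∈ mlb x y → ρ u + ρ l ≤ ρ x + ρ y
  M4 : ∀ x y l : S, l ∈ mlb x y → ρ x = ρ l → (mub x y).Nonempty
  M5 : ∀ x y : S, ρ x < ρ y →
    ∃ a : S, IsAtom a ∧ a ≤ y ∧ ¬ a ≤ x ∧ (mub x a).Nonempty

/-- `cl` is the closure operator of a matroid scheme `(S, ρ)`:
`cl x` is the greatest element above `x` of the same rank. -/
def IsClosureFun {S : Type*} [PartialOrder S] (ρ : S → ℕ) (cl : S → S) : Prop :=
  ∀ x : S, x ≤ cl x ∧ ρ (cl x) = ρ x ∧ ∀ y : S, x ≤ y → ρ y = ρ x → y ≤ cl x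

/-- The bases of a matroid scheme: the maximal independent elements. -/
def Bases {S : Type*} [PartialOrder S] [OrderBot S] (ρ : S → ℕ) : Set S :=
  {x | ρ x = natRank x ∧ ∀ w, ρ w = natRank w → x ≤ w → w = x}

/-- The circuits of a matroid scheme: the minimal dependent elements. -/
def Circuits {S : Type*} [PartialOrder S] [OrderBot S] (ρ : S → ℕ) : Set S :=
  {x | ρ x < natRank x ∧ ∀ y, ρ y < natRank y → y ≤ x → y = x}

/-- `c` is the complement `x ∖ a` of `a` in the Boolean lattice `S_{≤ x}`. -/
def IsComplementIn {S : Type*} [PartialOrder S] [OrderBot S] (c a x : S) : Prop :=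
  c ≤ x ∧ a ≤ x ∧ (∀ l : S, l ≤ c → l ≤ a → l = ⊥) ∧
    (∀ u : S, u ≤ x → c ≤ u → a ≤ u → u = x)

/-- The rank of a matroid scheme: the common value of `ρ` on maximal elements
(equal to the maximum value of `ρ`). -/
noncomputable def schemeRank {S : Type*} [Fintype S] (ρ : S → ℕ) : ℕ :=
  sSup (Set.range ρ)

/-- The Tutte polynomial of a matroid scheme, as a two-variable integer function. -/
noncomputable def tutte {S : Type*} [PartialOrder S] [OrderBot S] [Fintype S]
    (ρ : S → ℕ) (x y : ℤ) : ℤ :=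
  ∑ w : S, (x - 1) ^ (schemeRank ρ - ρ w) * (y - 1) ^ (natRank w - ρ w)

/-- An element of a poset is an order-atom if it covers a global minimum. -/
def OrdAtom {P : Type*} [PartialOrder P] (a : P) : Prop :=
  ∃ b : P, (∀ z : P, b ≤ z) ∧ b ⋖ a

/-- A partial order is a geometric lattice: it is bounded below, every pair has a least
upper bound and greatest lower bound, it is atomistic, and it is (upper) semimodular. -/
def IsGeomLatOrder (P : Type*) [PartialOrder P] : Prop :=
  (∃ b : P, ∀ x : P, b ≤ x) ∧
  (∀ x y : P, ∃ u : P, IsLUB {x, y} u) ∧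
  (∀ x y : P, ∃ l : P, IsGLB {x, y} l) ∧
  (∀ x : P, IsLUB {a : P | OrdAtom a ∧ a ≤ x} x) ∧
  (∀ x y m j : P, IsGLB {x, y} m → IsLUB {x, y} j → m ⋖ x → y ⋖ j)

/-- A geometric poset: a finite bounded-below poset with rank function `rk`
satisfying (G1) and (G2). -/
def IsGeometricPoset (P : Type*) [PartialOrder P] [OrderBot P] [Fintype P]
    (rk : P → ℕ) : Prop :=
  rk ⊥ = 0 ∧
  (∀ ⦃x y : P⦄, x ≤ y → rk x ≤ rk y) ∧
  (∀ x y : P, x ⋖ y → rk y = rk x + 1) ∧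
  (∀ m : P, IsMax m → IsGeomLatOrder (Set.Iic m)) ∧
  (∀ (x : P) (A : Set P), (∀ a ∈ A, IsAtom a) →
    ∀ y ∈ mubSet A, rk x < rk y → rk y = Nat.card A →
      ∃ a ∈ A, ¬ a ≤ x ∧ ∃ w : P, x ≤ w ∧ a ≤ w)

/-- The closure function is idempotent. -/
theorem cl_idem_aux {S : Type*} [PartialOrder S] (ρ : S → ℕ) (cl : S → S)
    (hcl : IsClosureFun ρ cl) (v : S) : cl (cl v) = cl v := by
  obtain ⟨h1, h2, h3⟩ := hcl v
  obtain ⟨h1', h2', _⟩ := hcl (cl v)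
  exact le_antisymm (h3 _ (h1.trans h1') (by rw [h2', h2])) h1'

/-- If `v ≤ u` and `u` is a flat, then `cl v ≤ u`. -/
theorem cl_le_flat_aux {S : Type*} [PartialOrder S] [OrderBot S] [Fintype S]
    (ρ : S → ℕ) (h : IsMatroidScheme ρ) (cl : S → S) (hcl : IsClosureFun ρ cl)
    (v u : S) (hvu : v ≤ u) (hu : cl u = u) : cl v ≤ u := by
  classical
  obtain ⟨hv1, hv2, _⟩ := hcl v
  -- pick a maximal common lower bound of `cl v` and `u` above `v`
  obtain ⟨l, hlmem, hlmax⟩ :=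
    (by obtain ⟨i, hi⟩ := Finset.exists_maximal (s := Finset.univ.filter (fun l => v ≤ l ∧ l ≤ cl v ∧ l ≤ u))
          ⟨v, by simp [hv1, hvu]⟩
        exact ⟨i, hi.1, fun m hm hlt => absurd hlt (not_lt_of_ge (hi.2 hm hlt.le))⟩ :
      ∃ l ∈ Finset.univ.filter (fun l => v ≤ l ∧ l ≤ cl v ∧ l ≤ u), ∀ m ∈ Finset.univ.filter (fun l => v ≤ l ∧ l ≤ cl v ∧ l ≤ u), ¬ l < m)
  simp only [Finset.mem_filter, Finset.mem_univ, true_and] at hlmem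
  obtain ⟨hl1, hl2, hl3⟩ := hlmem
  have hlmlb : l ∈ mlb (cl v) u := by
    refine ⟨hl2, hl3, fun m hm1 hm2 hlm => ?_⟩
    by_contra hne
    exact hlmax m (by simp [hl1.trans hlm, hm1, hm2]) (lt_of_le_of_ne hlm (Ne.symm hne))
  have hρl : ρ (cl v) = ρ l :=
    le_antisymm (hv2 ▸ h.M2 hl1) (h.M2 hl2)
  obtain ⟨m, hmmub⟩ := h.M4 (cl v) u l hlmlb hρl
  have hM3 := h.M3 (cl v) u m l hmmub hlmlb
  have hum : u ≤ m := hmmub.2.1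
  have hρm : ρ m = ρ u := le_antisymm (by omega) (h.M2 hum)
  have : m ≤ cl u := (hcl u).2.2 m hum hρm
  exact hmmub.1.trans (this.trans_eq hu)

/-- Lemma 5.7: if `u` is a minimal upper bound of `cl x` and `cl y` in the poset
of flats, then `u = cl v` for some minimal upper bound `v` of `x` and `y` in `S`. -/
theorem statement5 {S : Type*} [PartialOrder S] [OrderBot S] [Fintype S]
    (ρ : S → ℕ) (h : IsMatroidScheme ρ) (cl : S → S) (hcl : IsClosureFun ρ cl)
    (x y u : S) (hu : cl u = u) (hxu : cl x ≤ u) (hyu : cl y ≤ u)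
    (humin : ∀ v : S, cl v = v → cl x ≤ v → cl y ≤ v → v ≤ u → v = u) :
    ∃ v ∈ mub x y, cl v = u := by
  classical
  have hxcl := (hcl x).1
  have hycl := (hcl y).1
  -- pick a minimal common upper bound of `x` and `y` below `u`
  obtain ⟨v, hvmem, hvmin⟩ :=
    (by obtain ⟨i, hi⟩ := Finset.exists_minimal (s := Finset.univ.filter (fun w => x ≤ w ∧ y ≤ w ∧ w ≤ u))
          ⟨u, by simp [hxcl.trans hxu, hycl.trans hyu]⟩
        exact ⟨i, hi.1, fun m hm hlt => absurd hlt (not_lt_of_ge (hi.2 hm hlt.le))⟩ :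
      ∃ v ∈ Finset.univ.filter (fun w => x ≤ w ∧ y ≤ w ∧ w ≤ u), ∀ m ∈ Finset.univ.filter (fun w => x ≤ w ∧ y ≤ w ∧ w ≤ u), ¬ m < v)
  simp only [Finset.mem_filter, Finset.mem_univ, true_and] at hvmem
  obtain ⟨hxv, hyv, hvu⟩ := hvmem
  have hvmub : v ∈ mub x y := by
    refine ⟨hxv, hyv, fun w hw1 hw2 hwv => ?_⟩
    by_contra hne
    exact hvmin w (by simp [hw1, hw2, hwv.trans hvu]) (lt_of_le_of_ne hwv hne)
  refine ⟨v, hvmub, ?_⟩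
  have hclvu : cl v ≤ u := cl_le_flat_aux ρ h cl hcl v u hvu hu
  have hclv : cl (cl v) = cl v := cl_idem_aux ρ cl hcl v
  have hxclv : cl x ≤ cl v := cl_le_flat_aux ρ h cl hcl x (cl v) (hxv.trans (hcl v).1) hclv
  have hyclv : cl y ≤ cl v := cl_le_flat_aux ρ h cl hcl y (cl v) (hyv.trans (hcl v).1) hclv
  exact humin (cl v) hclv hxclv hyclv hclvu
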